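/- Let A be a finite-dimensional K-algebra and B a filtered multiplicative K-basis of A (i.e., B is a K-basis such that for all b1, b2 in B either b1*b2 = 0 or b1*b2 ∈ B, and B ∩ rad(A) is a K-basis of rad(A)). Then for every n ≥ 1, B ∩ rad(A)^n is a K-basis of rad(A)^n. -/

import Mathlib

/-- The Jacobson radical of a ring, as an ideal. -/
def ringRad (A : Type*) [Ring A] : Ideal A := (⊥ : Ideal A).jacobson

/-- `B` is a filtered multiplicative `K`-basis of the `K`-algebra `A`:
it is a `K`-basis, products of basis elements are `0` or again basis elements,
and `B ∩ rad A` is a `K`-basis of the Jacobson radical `rad A`. -/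
def IsFilteredMulBasis (K : Type*) {A : Type*} [Field K] [Ring A] [Algebra K A]
    (B : Set A) : Prop :=
  LinearIndependent K ((↑) : B → A) ∧ Submodule.span K B = ⊤ ∧
  (∀ b₁ ∈ B, ∀ b₂ ∈ B, b₁ * b₂ = 0 ∨ b₁ * b₂ ∈ B) ∧
  LinearIndependent K ((↑) : ↥(B ∩ (ringRad A : Set A)) → A) ∧
  Submodule.span K (B ∩ (ringRad A : Set A)) = Submodule.restrictScalars K (ringRad A)

theorem stmt_0 {K A : Type*} [Field K] [Ring A] [Algebra K A] [FiniteDimensional K A]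
    (B : Set A) (hB : IsFilteredMulBasis K B) (n : ℕ) (hn : 1 ≤ n) :
    LinearIndependent K ((↑) : ↥(B ∩ ((ringRad A ^ n : Ideal A) : Set A)) → A) ∧
    Submodule.span K (B ∩ ((ringRad A ^ n : Ideal A) : Set A)) =
      Submodule.restrictScalars K (ringRad A ^ n) := by
  obtain ⟨hli, -, hmul, -, hspan⟩ := hB
  refine ⟨linearIndependent_subtype_iff.2 ((linearIndependent_subtype_iff.1 hli).mono Set.inter_subset_left), ?_⟩
  induction n, hn using Nat.le_induction with
  | base => rw [Submodule.pow_one]; exact hspan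
  | succ n hn ih =>
    apply le_antisymm
    · rw [Submodule.span_le]
      intro x hx
      exact hx.2
    · intro x hx
      simp only [Submodule.restrictScalars_mem] at hx
      have hx' : x ∈ (ringRad A ^ n : Ideal A) * ringRad A := by
        rw [← Submodule.pow_succ]; exact hx
      refine Submodule.mul_induction_on hx' ?_ (fun a b ha hb => add_mem ha hb)
      intro m hm y hy
      have hm' : m ∈ Submodule.span K (B ∩ ((ringRad A ^ n : Ideal A) : Set A)) := by
        rw [ih]; exact hm
      have hy' : y ∈ Submodule.span K (B ∩ (ringRad A : Set A)) := by
        rw [hspan]; exact hy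
      have key : m * y ∈ Submodule.span K (B ∩ ((ringRad A ^ n : Ideal A) : Set A))
          * Submodule.span K (B ∩ (ringRad A : Set A)) :=
        Submodule.mul_mem_mul hm' hy'
      rw [Submodule.span_mul_span] at key
      refine Submodule.span_le.2 ?_ key
      rintro _ ⟨b₁, hb₁, b₂, hb₂, rfl⟩
      have hmem : b₁ * b₂ ∈ (ringRad A ^ (n + 1) : Ideal A) := by
        rw [Submodule.pow_succ]; exact Submodule.mul_mem_mul hb₁.2 hb₂.2
      rcases hmul b₁ hb₁.1 b₂ hb₂.1 with h0 | hB'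
      · show b₁ * b₂ ∈ _
        rw [h0]; exact (Submodule.span K _).zero_mem
      · exact Submodule.subset_span ⟨hB', hmem⟩
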